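/- Let M be a smooth manifold, f : M → ℝ smooth and convex along a family of curves in the following sense: for fixed t, s ↦ f(H(t,s)) is convex on [0,1], where H(t,·) joins γ₁(t) to γ₂(t). Suppose γ₁, γ₂ : ℝ → M satisfy, for some constant C > 0, (∂/∂s)|_{s=0} f(H(t,s)) ≥ −C·m(t) where m(t) := |grad f(γ₁(t))|, and d/dt f(γ₁(t)) = −m(t)². If f(γ₁(t)) is bounded below, then there is a sequence tᵢ → ∞ with m(tᵢ) → 0, and consequently liminf_{t→∞} f(γ₂(t)) ≥ lim_{t→∞} f(γ₁(t)). -/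

import Mathlib

open Filter

/-- Abstract convexity/comparison step for the Kempf-Ness flow. If `f∘γ₁` has
derivative `−m(t)²` and is bounded below, `s ↦ f(H(t,s))` is convex on `[0,1]` joining
`γ₁(t)` to `γ₂(t)` with initial `s`-derivative `≥ −C·m(t)`, and `f∘γ₂` is
nonincreasing, then `f(γ₁(t))` converges to some `L`, there is a sequence `tᵢ → ∞`
with `m(tᵢ) → 0`, and `liminf_{t→∞} f(γ₂(t)) ≥ L`. -/
theorem stmt_13 {M : Type*} (f : M → ℝ) (γ₁ γ₂ : ℝ → M) (H : ℝ → ℝ → M)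
    (m D : ℝ → ℝ) (C : ℝ) (hC : 0 < C)
    (hH0 : ∀ t, H t 0 = γ₁ t) (hH1 : ∀ t, H t 1 = γ₂ t)
    (hconv : ∀ t, ConvexOn ℝ (Set.Icc (0 : ℝ) 1) (fun s => f (H t s)))
    (hm : ∀ t, 0 ≤ m t)
    (hD : ∀ t, HasDerivAt (fun s => f (H t s)) (D t) 0)
    (hDlow : ∀ t, -C * m t ≤ D t)
    (hγ₁ : ∀ t, HasDerivAt (fun u => f (γ₁ u)) (-(m t) ^ 2) t)
    (hbdd : BddBelow (Set.range fun t => f (γ₁ t)))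
    (hanti : Antitone fun t => f (γ₂ t)) :
    ∃ L : ℝ, Tendsto (fun t => f (γ₁ t)) atTop (nhds L) ∧
      (∃ u : ℕ → ℝ, Tendsto u atTop atTop ∧
        Tendsto (fun i => m (u i)) atTop (nhds 0)) ∧
      L ≤ liminf (fun t => f (γ₂ t)) atTop := by
  set φ : ℝ → ℝ := fun t => f (γ₁ t) with hφ
  -- Step 1: φ is antitone and converges to its infimum L.
  have hφanti : Antitone φ :=
    antitone_of_hasDerivAt_nonpos hγ₁ (fun t => neg_nonpos.2 (sq_nonneg (m t)))
  set L : ℝ := ⨅ t, φ t with hL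
  have hφtendsto : Tendsto φ atTop (nhds L) := tendsto_atTop_ciInf hφanti hbdd
  have hLle : ∀ t, L ≤ φ t := fun t => ciInf_le hbdd t
  -- Step 2: the key comparison f(γ₂ t) ≥ f(γ₁ t) - C * m t.
  have hkey : ∀ t, φ t - C * m t ≤ f (γ₂ t) := by
    intro t
    set g : ℝ → ℝ := fun s => f (H t s) with hg
    have hslope : D t ≤ g 1 - g 0 := by
      have h1 : HasDerivWithinAt g (D t) (Set.Ioi 0) 0 := (hD t).hasDerivWithinAt
      have h2 : Tendsto (slope g 0) (nhdsWithin 0 (Set.Ioi 0 \ {0})) (nhds (D t)) :=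
        hasDerivWithinAt_iff_tendsto_slope.1 h1
      rw [Set.diff_singleton_eq_self (by simp)] at h2
      refine le_of_tendsto h2 ?_
      have hmem : Set.Ioo (0:ℝ) 1 ∈ nhdsWithin (0:ℝ) (Set.Ioi 0) :=
        Ioo_mem_nhdsGT_of_mem ⟨le_refl 0, one_pos⟩
      filter_upwards [hmem] with s hs
      have := (hconv t).secant_mono (a := 0) (x := s) (y := 1)
        (Set.left_mem_Icc.2 zero_le_one)
        ⟨hs.1.le, hs.2.le⟩ (Set.right_mem_Icc.2 zero_le_one) (ne_of_gt hs.1) one_ne_zero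
        hs.2.le
      rw [slope_def_field]
      simpa using this
    have := (hDlow t).trans hslope
    have hg0 : g 0 = φ t := by rw [hg]; simp [hH0 t, hφ]
    have hg1 : g 1 = f (γ₂ t) := by rw [hg]; simp [hH1 t]
    rw [hg0, hg1] at this
    linarith
  -- Step 3: for every ε > 0 and T, there is t ≥ T with m t < ε.
  have hfreq : ∀ ε : ℝ, 0 < ε → ∀ T : ℝ, ∃ t, T ≤ t ∧ m t < ε := by
    intro ε hε T
    by_contra hcon
    push_neg at hcon
    -- then ψ t = φ t + ε^2 t is antitone on [T, ∞), so φ → -∞.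
    have hψd : ∀ t, HasDerivAt (fun t => φ t + ε ^ 2 * t) (-(m t) ^ 2 + ε ^ 2) t := by
      intro t
      have := (hγ₁ t).add ((hasDerivAt_id t).const_mul (ε ^ 2))
      simp only [id, mul_one] at this
      exact this
    have hψanti : AntitoneOn (fun t => φ t + ε ^ 2 * t) (Set.Ici T) := by
      apply antitoneOn_of_hasDerivWithinAt_nonpos (f' := fun t => -(m t) ^ 2 + ε ^ 2)
        (convex_Ici T)
      · intro t _
        exact (hψd t).continuousAt.continuousWithinAt
      · intro t ht
        exact ((hψd t).hasDerivWithinAt).mono interior_subset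
      · intro t ht
        rw [interior_Ici] at ht
        have h1 : ε ≤ m t := hcon t ht.le
        nlinarith [hm t]
    obtain ⟨B, hB⟩ := hbdd
    simp only [lowerBounds, Set.mem_range, Set.mem_setOf_eq] at hB
    have hBle : ∀ t, B ≤ φ t := fun t => hB ⟨t, rfl⟩
    -- choose t large enough
    set t₀ : ℝ := max T ((φ T + ε ^ 2 * T - B) / ε ^ 2 + 1) with ht₀
    have h1 : T ≤ t₀ := le_max_left _ _
    have h2 := hψanti (Set.self_mem_Ici) (Set.mem_Ici.2 h1) h1
    have h3 : (φ T + ε ^ 2 * T - B) / ε ^ 2 + 1 ≤ t₀ := le_max_right _ _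
    have hε2 : (0:ℝ) < ε ^ 2 := by positivity
    rw [div_add' _ _ _ (ne_of_gt hε2), div_le_iff₀ hε2] at h3
    have := hBle t₀
    dsimp only at h2
    nlinarith
  -- Step 4: build the sequence u.
  have hchoice : ∀ i : ℕ, ∃ t, (i : ℝ) ≤ t ∧ m t < 1 / (i + 1) := fun i =>
    hfreq (1 / (i + 1)) (by positivity) i
  choose u hu1 hu2 using hchoice
  have huatTop : Tendsto u atTop atTop :=
    tendsto_atTop_mono hu1 tendsto_natCast_atTop_atTop
  have hmu : Tendsto (fun i => m (u i)) atTop (nhds 0) := by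
    have h0 : Tendsto (fun i : ℕ => 1 / ((i : ℝ) + 1)) atTop (nhds 0) :=
      tendsto_one_div_add_atTop_nhds_zero_nat
    exact squeeze_zero (fun i => hm (u i)) (fun i => (hu2 i).le) h0
  refine ⟨L, hφtendsto, ⟨u, huatTop, hmu⟩, ?_⟩
  -- Step 5: liminf bound. First show f(γ₂ t) ≥ L for all t.
  have hLγ₂ : ∀ t, L ≤ f (γ₂ t) := by
    intro t
    have hseq : Tendsto (fun i => φ (u i) - C * m (u i)) atTop (nhds (L - C * 0)) :=
      (hφtendsto.comp huatTop).sub (hmu.const_mul C)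
    rw [mul_zero, sub_zero] at hseq
    refine le_of_tendsto hseq ?_
    have : ∀ᶠ i in atTop, t ≤ u i := huatTop.eventually_ge_atTop t
    filter_upwards [this] with i hi
    exact (hkey (u i)).trans (hanti hi)
  refine le_liminf_of_le ?_ (Eventually.of_forall fun t => hLγ₂ t)
  refine isCoboundedUnder_ge_of_eventually_le atTop (x := f (γ₂ 0)) ?_
  filter_upwards [eventually_ge_atTop (0:ℝ)] with t ht using hanti ht
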